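/- Let b, Δ, Δ̄ ∈ ℂ with b ≠ 0, and let g be a nonzero polynomial in two variables over ℂ such that −(bλ+μ)·g(∂,λ+μ) = (∂+Δ̄λ)·g(∂+λ,μ) − (∂+μ+Δλ)·g(∂,μ) for all ∂, λ, μ ∈ ℂ. Then g is a homogeneous polynomial (in ∂ and λ jointly), its total degree m satisfies Δ − Δ̄ = m + b, and the coefficient of ∂^m in g is nonzero. -/

import Mathlib

/-- Evaluation of a two-variable polynomial at a pair of complex numbers. -/
noncomputable def ev2 (p : MvPolynomial (Fin 2) ℂ) (x y : ℂ) : ℂ :=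
  MvPolynomial.eval ![x, y] p

section lemmas

lemma aeval_p {A : Type*} [CommRing A] [Algebra ℂ A] (t : A) (g : MvPolynomial (Fin 2) ℂ) :
    Polynomial.aeval (R := ℂ) t (MvPolynomial.aeval ![Polynomial.X, 0] g) = MvPolynomial.aeval ![t, 0] g := by
  have h : (Polynomial.aeval (R := ℂ) t).comp (MvPolynomial.aeval (R := ℂ) ![Polynomial.X, (0 : Polynomial ℂ)])
      = MvPolynomial.aeval ![t, 0] := by
    apply MvPolynomial.algHom_ext
    intro i
    fin_cases i <;> simp
  calc Polynomial.aeval (R := ℂ) t (MvPolynomial.aeval ![Polynomial.X, 0] g)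
      = ((Polynomial.aeval (R := ℂ) t).comp (MvPolynomial.aeval (R := ℂ) ![Polynomial.X, (0 : Polynomial ℂ)])) g := rfl
    _ = MvPolynomial.aeval ![t, 0] g := by rw [h]

lemma aeval_cx (x t : ℂ) (g : MvPolynomial (Fin 2) ℂ) :
    Polynomial.aeval (R := ℂ) t (MvPolynomial.aeval ![Polynomial.C x, Polynomial.X] g)
      = MvPolynomial.aeval ![x, t] g := by
  have h : (Polynomial.aeval (R := ℂ) t).comp (MvPolynomial.aeval (R := ℂ) ![Polynomial.C x, Polynomial.X])
      = MvPolynomial.aeval ![x, t] := by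
    apply MvPolynomial.algHom_ext
    intro i
    fin_cases i <;> simp
  calc Polynomial.aeval (R := ℂ) t (MvPolynomial.aeval ![Polynomial.C x, Polynomial.X] g)
      = ((Polynomial.aeval (R := ℂ) t).comp (MvPolynomial.aeval (R := ℂ) ![Polynomial.C x, Polynomial.X])) g := rfl
    _ = MvPolynomial.aeval ![x, t] g := by rw [h]

lemma aeval_ev2 (x y : ℂ) (g : MvPolynomial (Fin 2) ℂ) :
    MvPolynomial.aeval ![x, y] g = ev2 g x y := by
  rw [ev2, ← MvPolynomial.coe_aeval_eq_eval]
  rfl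

lemma ev2_eval (v : Fin 2 → ℂ) (g : MvPolynomial (Fin 2) ℂ) :
    MvPolynomial.eval v g = ev2 g (v 0) (v 1) := by
  have : ![v 0, v 1] = v := by funext i; fin_cases i <;> rfl
  rw [ev2, this]

lemma mv_aeval_eq_eval (v : Fin 2 → ℂ) (q : MvPolynomial (Fin 2) ℂ) :
    MvPolynomial.aeval v q = MvPolynomial.eval v q := by
  rw [← MvPolynomial.coe_aeval_eq_eval]; rfl

lemma poly_aeval_eq_eval (x : ℂ) (q : Polynomial ℂ) :
    Polynomial.aeval (R := ℂ) x q = q.eval x := congrFun (Polynomial.coe_aeval_eq_eval x) q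

lemma eval_polyaeval (v : Fin 2 → ℂ) (t : MvPolynomial (Fin 2) ℂ) (p : Polynomial ℂ) :
    MvPolynomial.eval v (Polynomial.aeval (R := ℂ) t p) = p.eval (MvPolynomial.eval v t) := by
  rw [← mv_aeval_eq_eval, ← Polynomial.aeval_algHom_apply (MvPolynomial.aeval v) t p,
    mv_aeval_eq_eval, poly_aeval_eq_eval]

lemma coeff_aevalX0 (g : MvPolynomial (Fin 2) ℂ) (j : ℕ) :
    (MvPolynomial.aeval ![Polynomial.X, 0] g).coeff j = MvPolynomial.coeff (Finsupp.single 0 j) g := by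
  induction g using MvPolynomial.induction_on' with
  | monomial d a =>
    rw [MvPolynomial.aeval_monomial]
    rw [Finsupp.prod_fintype _ _ (fun i => pow_zero _)]
    rw [Fin.prod_univ_two]
    simp only [Matrix.cons_val_zero, Matrix.cons_val_one, Matrix.head_cons]
    rcases Nat.eq_zero_or_pos (d 1) with h1 | h1
    · rw [h1, pow_zero, mul_one]
      have hd : d = Finsupp.single 0 (d 0) := by
        ext i
        fin_cases i
        · simp
        · simp [h1]
      rw [MvPolynomial.coeff_monomial]
      by_cases hj : d 0 = j
      · subst hj
        rw [if_pos hd, ← Polynomial.C_eq_algebraMap, Polynomial.coeff_C_mul,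
          Polynomial.coeff_X_pow, if_pos rfl, mul_one]
      · rw [if_neg, ← Polynomial.C_eq_algebraMap, Polynomial.coeff_C_mul,
          Polynomial.coeff_X_pow, if_neg (fun h => hj h.symm), mul_zero]
        intro h
        apply hj
        rw [hd] at h
        have := congrArg (fun f => f (0 : Fin 2)) h
        simpa using this
    · rw [zero_pow (by omega : d 1 ≠ 0), mul_zero, mul_zero, Polynomial.coeff_zero,
        MvPolynomial.coeff_monomial, if_neg, eq_comm]
      intro h
      have := congrArg (fun f => f (1 : Fin 2)) h
      simp at this
      omega
  | add p q hp hq =>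
    rw [map_add, Polynomial.coeff_add, MvPolynomial.coeff_add, hp, hq]

end lemmas

/-- A nonzero polynomial solution `g` of the H-part cocycle equation (F) for `W(b)`, `b ≠ 0`,
is homogeneous (in `∂` and `λ` jointly), its total degree `m` satisfies `Δ − Δ̄ = m + b`,
and the coefficient of `∂^m` in `g` is nonzero. Here `Δ'` stands for `Δ̄`, variable `0`
is `∂` and variable `1` is `λ`. -/
theorem stmt_9 (b Δ Δ' : ℂ) (hb : b ≠ 0) (g : MvPolynomial (Fin 2) ℂ) (hg0 : g ≠ 0)
    (hg : ∀ pa lam mu : ℂ,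
      -(b * lam + mu) * ev2 g pa (lam + mu)
        = (pa + Δ' * lam) * ev2 g (pa + lam) mu - (pa + mu + Δ * lam) * ev2 g pa mu) :
    ∃ m : ℕ, g.IsHomogeneous m ∧ g.totalDegree = m ∧ Δ - Δ' = m + b ∧
      MvPolynomial.coeff (Finsupp.single 0 m) g ≠ 0 := by
  -- the restriction of g to the line λ = 0
  set p : Polynomial ℂ := MvPolynomial.aeval ![Polynomial.X, 0] g with hpdef
  have hpev : ∀ x : ℂ, p.eval x = ev2 g x 0 := by
    intro x
    rw [← Polynomial.coe_aeval_eq_eval, hpdef, aeval_p, aeval_ev2]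
  -- the key identity coming from μ = 0 in (F)
  have claim1 : MvPolynomial.C (-b) * MvPolynomial.X 1 * g
      = (MvPolynomial.X 0 + MvPolynomial.C Δ' * MvPolynomial.X 1)
          * Polynomial.aeval (MvPolynomial.X 0 + MvPolynomial.X 1) p
        - (MvPolynomial.X 0 + MvPolynomial.C Δ * MvPolynomial.X 1)
          * Polynomial.aeval (MvPolynomial.X 0) p := by
    apply MvPolynomial.funext
    intro v
    have e1 : MvPolynomial.eval v (Polynomial.aeval (R := ℂ) (MvPolynomial.X 0 + MvPolynomial.X 1 : MvPolynomial (Fin 2) ℂ) p)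
        = p.eval (v 0 + v 1) := by
      rw [eval_polyaeval]; simp
    have e2 : MvPolynomial.eval v (Polynomial.aeval (R := ℂ) (MvPolynomial.X 0 : MvPolynomial (Fin 2) ℂ) p)
        = p.eval (v 0) := by
      rw [eval_polyaeval]; simp
    have key := hg (v 0) (v 1) 0
    simp only [add_zero] at key
    simp only [map_sub, map_mul, map_add, MvPolynomial.eval_X, MvPolynomial.eval_C, e1, e2,
      ev2_eval, hpev]
    linear_combination key
  -- p is nonzero
  have hpne : p ≠ 0 := by
    intro h
    apply hg0
    rw [h] at claim1
    simp only [map_zero, mul_zero, sub_zero] at claim1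
    rcases mul_eq_zero.mp claim1 with h1 | h1
    · rcases mul_eq_zero.mp h1 with h2 | h2
      · exact absurd h2 (by simp [hb, MvPolynomial.C_eq_zero])
      · exact absurd h2 (MvPolynomial.X_ne_zero 1)
    · exact h1
  -- one-variable identity in λ, for each fixed x
  have hx : ∀ x : ℂ, Polynomial.C (-b) * (Polynomial.X * (MvPolynomial.aeval ![Polynomial.C x, Polynomial.X] g))
      = Polynomial.C x * (p.comp (Polynomial.C x + Polynomial.X))
        + Polynomial.C Δ' * (Polynomial.X * (p.comp (Polynomial.C x + Polynomial.X)))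
        - Polynomial.C x * Polynomial.C (p.eval x)
        - Polynomial.C Δ * (Polynomial.X * Polynomial.C (p.eval x)) := by
    intro x
    apply Polynomial.funext
    intro lam
    have hq : Polynomial.eval lam (MvPolynomial.aeval ![Polynomial.C x, Polynomial.X] g) = ev2 g x lam := by
      rw [← poly_aeval_eq_eval, aeval_cx, aeval_ev2]
    have hcomp : Polynomial.eval lam (p.comp (Polynomial.C x + Polynomial.X)) = ev2 g (x + lam) 0 := by
      rw [Polynomial.eval_comp]
      simp [hpev]
    have key := hg x lam 0
    simp only [add_zero] at key
    simp only [Polynomial.eval_mul, Polynomial.eval_add, Polynomial.eval_sub, Polynomial.eval_C,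
      Polynomial.eval_X, hq, hcomp, hpev]
    linear_combination key
  -- the Euler equation for p
  have ode_ev : ∀ x : ℂ, x * p.derivative.eval x = (Δ - Δ' - b) * p.eval x := by
    intro x
    have h := congrArg (fun q : Polynomial ℂ => q.coeff 1) (hx x)
    simp only [Polynomial.coeff_sub, Polynomial.coeff_add, Polynomial.coeff_C_mul] at h
    have cX : ∀ q : Polynomial ℂ, (Polynomial.X * q).coeff 1 = q.coeff 0 :=
      fun q => Polynomial.coeff_X_mul q 0
    rw [cX, cX, cX] at h
    have hq0 : (MvPolynomial.aeval ![Polynomial.C x, Polynomial.X] g).coeff 0 = p.eval x := by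
      rw [Polynomial.coeff_zero_eq_eval_zero, ← poly_aeval_eq_eval, aeval_cx, aeval_ev2, hpev]
    have hpc0 : (p.comp (Polynomial.C x + Polynomial.X)).coeff 0 = p.eval x := by
      rw [Polynomial.coeff_zero_eq_eval_zero, Polynomial.eval_comp]
      simp
    have hpc1 : (p.comp (Polynomial.C x + Polynomial.X)).coeff 1 = p.derivative.eval x := by
      have d1 : (Polynomial.derivative (p.comp (Polynomial.C x + Polynomial.X))).coeff 0
          = (p.comp (Polynomial.C x + Polynomial.X)).coeff 1 := by
        rw [Polynomial.coeff_derivative]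
        norm_num
      rw [← d1, Polynomial.derivative_comp]
      simp [Polynomial.coeff_zero_eq_eval_zero, Polynomial.eval_comp]
    rw [hq0, hpc0, hpc1] at h
    simp only [Polynomial.coeff_C] at h
    simp at h
    linear_combination -h
  -- polynomial form of the Euler equation
  have ode : Polynomial.X * Polynomial.derivative p = Polynomial.C (Δ - Δ' - b) * p := by
    apply Polynomial.funext
    intro x
    simpa using ode_ev x
  set n : ℕ := p.natDegree with hn
  set a : ℂ := p.coeff n with ha
  have hane : a ≠ 0 := by
    rw [ha, hn]
    exact Polynomial.leadingCoeff_ne_zero.mpr hpne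
  -- coefficient-wise consequence of the Euler equation
  have key : ∀ j : ℕ, (j : ℂ) * p.coeff j = (Δ - Δ' - b) * p.coeff j := by
    intro j
    have h := congrArg (fun q : Polynomial ℂ => q.coeff j) ode
    simp only [Polynomial.coeff_C_mul] at h
    cases j with
    | zero =>
      rw [show ((Polynomial.X : Polynomial ℂ) * Polynomial.derivative p).coeff 0
          = (Polynomial.X : Polynomial ℂ).coeff 0 * (Polynomial.derivative p).coeff 0
          from Polynomial.mul_coeff_zero _ _] at h
      simp only [Polynomial.coeff_X_zero, zero_mul] at h
      rw [Nat.cast_zero, zero_mul, ← h]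
    | succ k =>
      rw [Polynomial.coeff_X_mul, Polynomial.coeff_derivative] at h
      push_cast
      linear_combination h
  have hc : Δ - Δ' - b = (n : ℂ) := by
    have := key n
    rw [← ha] at this
    exact (mul_right_cancel₀ hane this.symm)
  have hcoeffz : ∀ j : ℕ, j ≠ n → p.coeff j = 0 := by
    intro j hj
    have h := key j
    rw [hc] at h
    by_contra hne
    exact hj (Nat.cast_injective (mul_right_cancel₀ hne h))
  have hpeq : p = Polynomial.C a * Polynomial.X ^ n := by
    ext j
    rw [Polynomial.coeff_C_mul, Polynomial.coeff_X_pow]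
    by_cases hj : j = n
    · subst hj; simp [ha]
    · rw [hcoeffz j hj, if_neg hj, mul_zero]
  -- substitute the monomial form into claim1
  have e1 : Polynomial.aeval (R := ℂ) (MvPolynomial.X 0 + MvPolynomial.X 1 : MvPolynomial (Fin 2) ℂ) p
      = MvPolynomial.C a * (MvPolynomial.X 0 + MvPolynomial.X 1) ^ n := by
    rw [hpeq]
    simp [MvPolynomial.algebraMap_eq]
  have e2 : Polynomial.aeval (R := ℂ) (MvPolynomial.X 0 : MvPolynomial (Fin 2) ℂ) p
      = MvPolynomial.C a * (MvPolynomial.X 0) ^ n := by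
    rw [hpeq]
    simp [MvPolynomial.algebraMap_eq]
  rw [e1, e2] at claim1
  have claim2 : MvPolynomial.X 1 * (MvPolynomial.C (-b) * g)
      = (MvPolynomial.X 0 + MvPolynomial.C Δ' * MvPolynomial.X 1)
          * (MvPolynomial.C a * (MvPolynomial.X 0 + MvPolynomial.X 1) ^ n)
        - (MvPolynomial.X 0 + MvPolynomial.C Δ * MvPolynomial.X 1)
          * (MvPolynomial.C a * (MvPolynomial.X 0) ^ n) := by
    linear_combination claim1
  have hhom : (MvPolynomial.X 1 * (MvPolynomial.C (-b) * g)).IsHomogeneous (n + 1) := by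
    rw [claim2]
    have hX0 := MvPolynomial.isHomogeneous_X ℂ (0 : Fin 2)
    have hX1 := MvPolynomial.isHomogeneous_X ℂ (1 : Fin 2)
    have h1 : (MvPolynomial.X 0 + MvPolynomial.C Δ' * MvPolynomial.X 1 :
        MvPolynomial (Fin 2) ℂ).IsHomogeneous 1 :=
      hX0.add (by simpa using (MvPolynomial.isHomogeneous_C _ Δ').mul hX1)
    have h1' : (MvPolynomial.X 0 + MvPolynomial.C Δ * MvPolynomial.X 1 :
        MvPolynomial (Fin 2) ℂ).IsHomogeneous 1 :=
      hX0.add (by simpa using (MvPolynomial.isHomogeneous_C _ Δ).mul hX1)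
    have h2 : (MvPolynomial.C a * (MvPolynomial.X 0 + MvPolynomial.X 1) ^ n :
        MvPolynomial (Fin 2) ℂ).IsHomogeneous n := by
      simpa using (MvPolynomial.isHomogeneous_C _ a).mul ((hX0.add hX1).pow n)
    have h2' : (MvPolynomial.C a * (MvPolynomial.X 0) ^ n :
        MvPolynomial (Fin 2) ℂ).IsHomogeneous n := by
      simpa using (MvPolynomial.isHomogeneous_C _ a).mul (hX0.pow n)
    have := (h1.mul h2).sub (h1'.mul h2')
    simpa [Nat.add_comm] using this
  have hgh : g.IsHomogeneous n := by
    intro d hd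
    have hd' : MvPolynomial.coeff (Finsupp.single 1 1 + d)
        (MvPolynomial.X 1 * (MvPolynomial.C (-b) * g)) ≠ 0 := by
      rw [MvPolynomial.coeff_X_mul, MvPolynomial.coeff_C_mul]
      exact mul_ne_zero (neg_ne_zero.mpr hb) hd
    have hw := hhom hd'
    rw [map_add] at hw
    have hs : (Finsupp.weight (1 : Fin 2 → ℕ)) (Finsupp.single (1 : Fin 2) 1) = 1 := by
      simp [Finsupp.weight_apply, Finsupp.sum_single_index]
    rw [hs] at hw
    omega
  refine ⟨n, hgh, hgh.totalDegree hg0, by linear_combination hc, ?_⟩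
  rw [← coeff_aevalX0 g n]
  show p.coeff n ≠ 0
  rw [← ha]
  exact hane
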